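/- arXiv:1606.05361 — 6 statements merged into one kernel-verified Lean document; each statement's English description precedes it below -/
import Mathlib

section
/- Consider a two-period store with linear prices p_t(y) = p̄_t + p'_t y, completely inelastic demands d_t(p) = d*_t ≥ 0, efficiency ε, capacity E, nonbinding rate constraints, starting and finishing empty, and suppose p̄₁ < ε p̄₂. Then the change in consumer surplus caused by the introduction of the store equals min((ε p̄₂ − p̄₁)/(2(p'₁ + ε² p'₂)), E) · (ε p'₂ d*₂ − p'₁ d*₁), and this is strictly negative whenever ε p'₂ d*₂ < p'₁ d*₁. -/
/-- two-period store, linear prices, inelastic demands `d_t`.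
With `pbar₁ < ε pbar₂` and optimal purchase `x = min(x*, E)`, the change in
consumer surplus `−∑_t h(x_t) p'_t d_t` equals
`min(x*, E) · (ε p'₂ d₂ − p'₁ d₁)`, strictly negative when
`ε p'₂ d₂ < p'₁ d₁`. -/
theorem stmt4 (ε pbar1 pbar2 p1' p2' d1 d2 E : ℝ) (hε0 : 0 < ε) (hε1 : ε ≤ 1)
    (hp1 : 0 < pbar1) (hp2 : 0 < pbar2) (hq1 : 0 < p1') (hq2 : 0 < p2')
    (hd1 : 0 ≤ d1) (hd2 : 0 ≤ d2) (hE : 0 < E) (hbuy : pbar1 < ε * pbar2) :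
    let x := min ((ε * pbar2 - pbar1) / (2 * (p1' + ε ^ 2 * p2'))) E
    let h : ℝ → ℝ := fun y => if 0 ≤ y then y else ε * y
    let ΔCS := -(h x * p1' * d1 + h (-x) * p2' * d2)
    ΔCS = x * (ε * p2' * d2 - p1' * d1) ∧ (ε * p2' * d2 < p1' * d1 → ΔCS < 0) := by
  intro x h ΔCS
  have hden : 0 < 2 * (p1' + ε ^ 2 * p2') := by positivity
  have hxstar : 0 < (ε * pbar2 - pbar1) / (2 * (p1' + ε ^ 2 * p2')) :=
    div_pos (by linarith) hden
  have hx : 0 < x := lt_min hxstar hE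
  have hhx : h x = x := if_pos hx.le
  have hhnx : h (-x) = ε * (-x) := if_neg (by simpa using not_le.mpr hx)
  have hΔ : ΔCS = x * (ε * p2' * d2 - p1' * d1) := by
    simp only [ΔCS, hhx, hhnx]; ring
  refine ⟨hΔ, fun hlt => ?_⟩
  rw [hΔ]
  exact mul_neg_of_pos_of_neg hx (by linarith)
end

section
/- Suppose for store j there exists a vector μ* = (μ*₁,…,μ*_T) and a feasible policy S* = (S*₀,…,S*_T) such that: (ii) for each t, x_t(S*) = S*_t − S*_{t−1} minimizes C_t(x) − μ*_t x over the rate-constraint interval X = [−P_O, P_I]; and (iii) the complementary slackness conditions hold: μ*_{t+1} = μ*_t if 0 < S*_t < E, μ*_{t+1} ≤ μ*_t if S*_t = 0, μ*_{t+1} ≥ μ*_t if S*_t = E, for 1 ≤ t ≤ T−1. Then S* minimizes ∑_{t=1}^T C_t(x_t(S)) over all policies S satisfying S₀ = S*₀, S_T = S*_T, 0 ≤ S_t ≤ E, and x_t(S) ∈ X. -/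
/-- Feasibility of a policy `S` for the single-store problem: fixed endpoints,
capacity constraints `0 ≤ S_t ≤ E` for `1 ≤ t ≤ T−1`, and rate constraints
`−P_O ≤ S_t − S_{t−1} ≤ P_I` for `1 ≤ t ≤ T`. -/
def Feasible (T : ℕ) (E PO PI S0 ST : ℝ) (S : ℕ → ℝ) : Prop :=
  S 0 = S0 ∧ S T = ST ∧
  (∀ t, 1 ≤ t → t < T → 0 ≤ S t ∧ S t ≤ E) ∧
  (∀ t, 1 ≤ t → t ≤ T → -PO ≤ S t - S (t - 1) ∧ S t - S (t - 1) ≤ PI)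

/-- Lagrangian sufficiency: if `S*` is feasible, each increment
`x_t(S*)` minimizes `C_t x − μ*_t x` over the rate interval, and the
complementary slackness conditions hold, then `S*` minimizes the total cost
over all feasible policies. -/
theorem stmt5 (T : ℕ) (hT : 1 ≤ T) (E PO PI S0 ST : ℝ)
    (C : ℕ → ℝ → ℝ) (Sstar μ : ℕ → ℝ)
    (hfeas : Feasible T E PO PI S0 ST Sstar)
    (hmin : ∀ t, 1 ≤ t → t ≤ T → ∀ x ∈ Set.Icc (-PO) PI,
      C t (Sstar t - Sstar (t - 1)) - μ t * (Sstar t - Sstar (t - 1)) ≤ C t x - μ t * x)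
    (hcs : ∀ t, 1 ≤ t → t < T →
      ((0 < Sstar t ∧ Sstar t < E → μ (t + 1) = μ t) ∧
       (Sstar t = 0 → μ (t + 1) ≤ μ t) ∧
       (Sstar t = E → μ t ≤ μ (t + 1)))) :
    ∀ S : ℕ → ℝ, Feasible T E PO PI S0 ST S →
      ∑ t ∈ Finset.Icc 1 T, C t (Sstar t - Sstar (t - 1)) ≤
        ∑ t ∈ Finset.Icc 1 T, C t (S t - S (t - 1)) := by
  intro S hS
  obtain ⟨h0, hTend, hcap, hrate⟩ := hS
  obtain ⟨h0s, hTs, hcaps, hrates⟩ := hfeas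
  set D : ℕ → ℝ := fun t => Sstar t - S t with hD
  have hD0 : D 0 = 0 := by simp [hD, h0, h0s]
  have hDT : D T = 0 := by simp [hD, hTend, hTs]
  have step1 : ∑ t ∈ Finset.Icc 1 T,
        (C t (Sstar t - Sstar (t - 1)) - μ t * (Sstar t - Sstar (t - 1)))
      ≤ ∑ t ∈ Finset.Icc 1 T, (C t (S t - S (t - 1)) - μ t * (S t - S (t - 1))) := by
    apply Finset.sum_le_sum
    intro t ht
    simp only [Finset.mem_Icc] at ht
    exact hmin t ht.1 ht.2 _ ⟨(hrate t ht.1 ht.2).1, (hrate t ht.1 ht.2).2⟩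
  have key : ∑ t ∈ Finset.Icc 1 T, μ t * (D t - D (t - 1)) ≤ 0 := by
    have hrw : ∀ t ∈ Finset.Icc 1 T,
        μ t * (D t - D (t - 1)) =
          (μ t - μ (t + 1)) * D t + (μ (t + 1) * D t - μ ((t-1)+1) * D (t - 1)) := by
      intro t ht
      simp only [Finset.mem_Icc] at ht
      rw [Nat.sub_add_cancel ht.1]
      ring
    rw [Finset.sum_congr rfl hrw, Finset.sum_add_distrib]
    have htel : ∑ t ∈ Finset.Icc 1 T,
        (μ (t + 1) * D t - μ ((t-1)+1) * D (t - 1)) = 0 := by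
      rw [← Finset.Ico_add_one_right_eq_Icc, Finset.sum_Ico_eq_sum_range]
      simp only [Nat.add_sub_cancel]
      have : ∀ i ∈ Finset.range T,
          μ (1 + i + 1) * D (1 + i) - μ ((1+i-1)+1) * D (1 + i - 1)
            = (fun j => μ (j + 1) * D j) (i + 1) - (fun j => μ (j + 1) * D j) i := by
        intro i _
        simp [Nat.add_sub_cancel_left, Nat.add_comm 1 i]
      rw [Finset.sum_congr rfl this, Finset.sum_range_sub (fun j => μ (j + 1) * D j)]
      simp [hD0, hDT]
    rw [htel, add_zero]
    apply Finset.sum_nonpos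
    intro t ht
    simp only [Finset.mem_Icc] at ht
    rcases eq_or_lt_of_le ht.2 with hEq | hlt
    · rw [hEq, hDT, mul_zero]
    · obtain ⟨hc1, hc2, hc3⟩ := hcs t ht.1 hlt
      obtain ⟨hl, hu⟩ := hcaps t ht.1 hlt
      obtain ⟨hl', hu'⟩ := hcap t ht.1 hlt
      rcases eq_or_lt_of_le hl with h0' | h0'
      · have : D t ≤ 0 := by simp [hD, ← h0', hl']
        exact mul_nonpos_of_nonneg_of_nonpos (by linarith [hc2 h0'.symm]) this
      · rcases eq_or_lt_of_le hu with hE | hE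
        · have : 0 ≤ D t := by simp [hD, hE]; linarith
          exact mul_nonpos_of_nonpos_of_nonneg (by linarith [hc3 hE]) this
        · rw [hc1 ⟨h0', hE⟩]; ring_nf; simp
  have hsub : ∀ t ∈ Finset.Icc 1 T,
      μ t * (D t - D (t - 1)) =
        μ t * (Sstar t - Sstar (t - 1)) - μ t * (S t - S (t - 1)) := by
    intro t _; simp only [hD]; ring
  rw [Finset.sum_congr rfl hsub, Finset.sum_sub_distrib] at key
  rw [Finset.sum_sub_distrib, Finset.sum_sub_distrib] at step1
  linarith
end

section
/- Consider n competing stores with identical rate constraints and efficiencies, with capacities E₁ ≤ ⋯ ≤ E_n, starting levels ordered as S*_{1,0} ≤ ⋯ ≤ S*_{n,0} and finishing levels ordered as S*_{1,T} ≤ ⋯ ≤ S*_{n,T}. Then at any Nash equilibrium (S*₁,…,S*_n) with associated Lagrange multipliers (μ*₁,…,μ*_n) satisfying the optimality conditions, the levels of the stores are ordered at all times: S*_{i,t} ≤ S*_{j,t} for all t whenever E_i ≤ E_j. -/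
/-- ordering of store levels at a Nash equilibrium: consider
`n` competing stores with identical rate constraints and efficiencies, whose
starting and finishing levels are ordered by their capacities.  At a Nash
equilibrium `S` with associated Lagrange multipliers `μ` satisfying the
optimality conditions — in particular the monotone-best-response property
`μ i t ≥ μ j t ↔ x_t(S i) ≥ x_t(S j)` and complementary slackness — the
levels of the stores are at all times ordered by their capacities. -/
theorem stmt10 (n : ℕ) (T : ℕ) (hT : 1 ≤ T)
    (E : Fin n → ℝ) (hEpos : ∀ j, 0 < E j)
    (S μ : Fin n → ℕ → ℝ)
    -- capacity constraints at equilibrium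
    (hcap : ∀ j, ∀ t ≤ T, 0 ≤ S j t ∧ S j t ≤ E j)
    -- starting and finishing levels ordered by the capacity constraints
    (hstart : ∀ i j, E i ≤ E j → S i 0 ≤ S j 0)
    (hfinish : ∀ i j, E i ≤ E j → S i T ≤ S j T)
    -- monotone best response to the multipliers (equation (16))
    (hkey : ∀ i j, ∀ t, 1 ≤ t → t ≤ T →
      (μ j t ≤ μ i t ↔ S j t - S j (t - 1) ≤ S i t - S i (t - 1)))
    -- complementary slackness for each store
    (hcs : ∀ j, ∀ t, 1 ≤ t → t < T →
      ((0 < S j t ∧ S j t < E j → μ j (t + 1) = μ j t) ∧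
       (S j t = 0 → μ j (t + 1) ≤ μ j t) ∧
       (S j t = E j → μ j t ≤ μ j (t + 1)))) :
    ∀ i j, E i ≤ E j → ∀ t ≤ T, S i t ≤ S j t := by
  classical
  intro i j hE
  by_contra hcon
  push_neg at hcon
  obtain ⟨t, htT, hlt⟩ := hcon
  have ht1 : 1 ≤ t := by
    rcases Nat.eq_zero_or_pos t with h | h
    · subst h; exact absurd (hstart i j hE) (not_le.2 hlt)
    · exact h
  have htT' : t < T := lt_of_le_of_ne htT (by
    rintro rfl; exact absurd (hfinish i j hE) (not_le.2 hlt))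
  -- b : least s > t with S i s ≤ S j s
  have hQ : ∃ s, t < s ∧ S i s ≤ S j s := ⟨T, htT', hfinish i j hE⟩
  set b := Nat.find hQ with hbdef
  obtain ⟨htb, hSb⟩ := Nat.find_spec hQ
  have hbT : b ≤ T := Nat.find_le ⟨htT', hfinish i j hE⟩
  -- a : greatest s ≤ t with S i s ≤ S j s
  set P : ℕ → Prop := fun a => S i a ≤ S j a with hPdef
  set a := Nat.findGreatest P t with hadef
  have hPa : P a := Nat.findGreatest_spec (Nat.zero_le t) (hstart i j hE)
  have hat : a < t := by
    have hle : a ≤ t := Nat.findGreatest_le t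
    rcases lt_or_eq_of_le hle with h | h
    · exact h
    · exact absurd (h ▸ hPa) (not_le.2 hlt)
  -- on (a, b) the order is reversed
  have hmid : ∀ s, a < s → s < b → S j s < S i s := by
    intro s has hsb
    by_contra hc
    push_neg at hc
    rcases le_or_gt s t with h | h
    · exact Nat.findGreatest_is_greatest has h hc
    · exact Nat.find_min hQ hsb ⟨h, hc⟩
  have hab : a + 1 ≤ b := by omega
  -- Claim A : μ j (a+1) < μ i (a+1)
  have hA : μ j (a + 1) < μ i (a + 1) := by
    have hk := hkey j i (a + 1) (by omega) (by omega)
    rw [Nat.add_sub_cancel] at hk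
    by_contra hc
    push_neg at hc
    have h1 : S j (a + 1) < S i (a + 1) := hmid (a + 1) (by omega) (by omega)
    have := hk.1 hc
    simp only [hPdef] at hPa
    linarith
  -- Claim B : μ i b < μ j b
  have hB : μ i b < μ j b := by
    have hk := hkey i j b (by omega) hbT
    by_contra hc
    push_neg at hc
    have h1 : S j (b - 1) < S i (b - 1) := hmid (b - 1) (by omega) (by omega)
    have := hk.1 hc
    linarith
  -- monotonicity of the multipliers on [a+1, b]
  have hMono : ∀ s, a + 1 ≤ s → s ≤ b → μ j s ≤ μ j (a + 1) ∧ μ i (a + 1) ≤ μ i s := by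
    intro s hs
    induction s, hs using Nat.le_induction with
    | base => intro _; exact ⟨le_refl _, le_refl _⟩
    | succ s hs ih =>
      intro hsb
      have hsb' : s < b := by omega
      obtain ⟨ihj, ihi⟩ := ih (le_of_lt hsb')
      have h1s : 1 ≤ s := by omega
      have hsT : s < T := lt_of_lt_of_le hsb' hbT
      obtain ⟨c1i, c2i, c3i⟩ := hcs i s h1s hsT
      obtain ⟨c1j, c2j, c3j⟩ := hcs j s h1s hsT
      have hm : S j s < S i s := hmid s (by omega) hsb'
      have hci := hcap i s (le_of_lt hsT)
      have hcj := hcap j s (le_of_lt hsT)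
      have hi : μ i s ≤ μ i (s + 1) := by
        rcases lt_or_eq_of_le hci.2 with h | h
        · exact le_of_eq (c1i ⟨lt_of_le_of_lt hcj.1 hm, h⟩).symm
        · exact c3i h
      have hj : μ j (s + 1) ≤ μ j s := by
        rcases eq_or_lt_of_le hcj.1 with h | h
        · exact c2j h.symm
        · exact le_of_eq (c1j ⟨h, lt_of_lt_of_le (lt_of_lt_of_le hm hci.2) hE⟩)
      exact ⟨le_trans hj ihj, le_trans ihi hi⟩
  obtain ⟨hjb, hib⟩ := hMono b hab le_rfl
  linarith
end

section
/- With linear prices p_t(x) = p̄_t + p'_t x, common efficiency ε, no capacity or rate constraints, common starting level S*₀ = finishing level (large enough that stores never empty at equilibrium), the unique symmetric Nash equilibrium common policy S̄ satisfies: there exists λ > 0, independent of n, with x_t(S̄) = (λ − p̄_t)/((n+1)p'_t) if p̄_t < λ; x_t(S̄) = 0 if λ ≤ p̄_t ≤ λ/ε; and x_t(S̄) = (λ − ε p̄_t)/((n+1)ε² p'_t) if p̄_t ≥ λ/ε; where λ is chosen so that ∑_t x_t(S̄) = 0. -/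
/-- `hfun ε x`: volume traded, `x` when buying, `ε x` when selling. -/
noncomputable def hfun (ε x : ℝ) : ℝ := if 0 ≤ x then x else ε * x

/-- The objective of the unconstrained symmetric `n`-store problem: the common
policy with increments `x` at the symmetric Nash equilibrium minimizes
`∑_t (pbar_t h(x_t) + ½ (n+1) p'_t h(x_t)²)` subject to `∑_t x_t = 0`. -/
noncomputable def symObj (T n : ℕ) (pbar p' : ℕ → ℝ) (ε : ℝ) (x : ℕ → ℝ) : ℝ :=
  ∑ t ∈ Finset.Icc 1 T,
    (pbar t * hfun ε (x t) + ((n : ℝ) + 1) / 2 * p' t * (hfun ε (x t)) ^ 2)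

lemma key (a b ε lam y x : ℝ) (ha : 0 < a) (hb : 0 < b) (hε : 0 < ε) (hε1 : ε ≤ 1)
    (hx : x = max (lam - a) 0 / (2 * b) + min (lam - ε * a) 0 / (2 * b * ε ^ 2))
    (hy : y ≠ x) :
    a * hfun ε x + b * hfun ε x ^ 2 - lam * x
      < a * hfun ε y + b * hfun ε y ^ 2 - lam * y := by
  have hb2 : (0:ℝ) < 2 * b := by linarith
  have hε2 : (0:ℝ) < ε ^ 2 := by positivity
  rcases le_or_gt lam a with h1 | h1
  · rcases le_or_gt (ε * a) lam with h2 | h2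
    · have hx0 : x = 0 := by
        rw [hx, max_eq_right (by linarith), min_eq_right (by linarith)]
        simp
      subst hx0
      simp only [hfun, if_pos le_rfl]
      rcases le_or_gt 0 y with hy0 | hy0
      · have hy0' : 0 < y := lt_of_le_of_ne hy0 (Ne.symm hy)
        simp only [hfun, if_pos hy0]
        nlinarith [mul_pos hb (mul_pos hy0' hy0')]
      · simp only [hfun, if_neg (not_le.2 hy0)]
        nlinarith [mul_pos hb (mul_pos hε2 (mul_pos (neg_pos.2 hy0) (neg_pos.2 hy0))),
          mul_nonneg (by linarith : (0:ℝ) ≤ lam - ε * a) (by linarith : (0:ℝ) ≤ -y)]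
    · have hxval : x = (lam - ε * a) / (2 * b * ε ^ 2) := by
        rw [hx, max_eq_right (by linarith), min_eq_left (by linarith)]
        simp
      have hxneg : x < 0 := by
        rw [hxval]; apply div_neg_of_neg_of_pos (by linarith) (by positivity)
      have e : ε * a + 2 * b * ε ^ 2 * x - lam = 0 := by
        rw [hxval]; field_simp; ring
      simp only [hfun, if_neg (not_le.2 hxneg)]
      rcases le_or_gt 0 y with hy0 | hy0
      · simp only [hfun, if_pos hy0]
        nlinarith [mul_pos hb (mul_pos hε2 (mul_pos (neg_pos.2 hxneg) (neg_pos.2 hxneg))),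
          mul_nonneg (by linarith : (0:ℝ) ≤ a - lam) hy0,
          mul_nonneg hb.le (mul_self_nonneg y)]
      · simp only [hfun, if_neg (not_le.2 hy0)]
        have hsq : 0 < (y - x) ^ 2 := pow_two_pos_of_ne_zero (sub_ne_zero.2 hy)
        nlinarith [mul_pos hb (mul_pos hε2 hsq)]
  · have hxval : x = (lam - a) / (2 * b) := by
      rw [hx, max_eq_left (by linarith), min_eq_right (by nlinarith)]
      simp
    have hxpos : 0 < x := by rw [hxval]; exact div_pos (by linarith) hb2
    have e : a + 2 * b * x - lam = 0 := by rw [hxval]; field_simp; ring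
    simp only [hfun, if_pos hxpos.le]
    rcases le_or_gt 0 y with hy0 | hy0
    · simp only [hfun, if_pos hy0]
      have hsq : 0 < (y - x) ^ 2 := pow_two_pos_of_ne_zero (sub_ne_zero.2 hy)
      nlinarith [mul_pos hb hsq]
    · simp only [hfun, if_neg (not_le.2 hy0)]
      nlinarith [mul_pos hb (mul_pos hxpos hxpos),
        mul_pos (by nlinarith : (0:ℝ) < lam - ε * a) (by linarith : (0:ℝ) < -y),
        mul_pos hb (mul_pos hε2 (mul_pos (neg_pos.2 hy0) (neg_pos.2 hy0)))]

/-- with linear prices, common efficiency `ε`, and no capacity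
or rate constraints (only the cyclic constraint `∑_t x_t = 0`), the symmetric
`n`-store Nash equilibrium increments are given by the three-case formula with
a Lagrange multiplier `λ > 0` independent of `n`. -/
theorem stmt15 (T : ℕ) (hT : 1 ≤ T) (pbar p' : ℕ → ℝ)
    (hpbar : ∀ t, 1 ≤ t → t ≤ T → 0 < pbar t) (hp' : ∀ t, 1 ≤ t → t ≤ T → 0 < p' t)
    (ε : ℝ) (hε0 : 0 < ε) (hε1 : ε ≤ 1)
    -- for each `n ≥ 1`, `xf n` are the equilibrium increments: they satisfy
    -- the cyclic constraint and minimize the symmetric objective under it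
    (xf : ℕ → ℕ → ℝ)
    (hcyc : ∀ n, 1 ≤ n → ∑ t ∈ Finset.Icc 1 T, xf n t = 0)
    (hmin : ∀ n, 1 ≤ n → ∀ y : ℕ → ℝ, (∑ t ∈ Finset.Icc 1 T, y t = 0) →
      symObj T n pbar p' ε (xf n) ≤ symObj T n pbar p' ε y) :
    ∃ lam : ℝ, 0 < lam ∧ ∀ n, 1 ≤ n → ∀ t, 1 ≤ t → t ≤ T →
      (pbar t < lam → xf n t = (lam - pbar t) / (((n : ℝ) + 1) * p' t)) ∧
      (lam ≤ pbar t → pbar t ≤ lam / ε → xf n t = 0) ∧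
      (lam / ε ≤ pbar t →
        xf n t = (lam - ε * pbar t) / (((n : ℝ) + 1) * ε ^ 2 * p' t)) := by
  have hSne : (Finset.Icc 1 T).Nonempty := Finset.nonempty_Icc.2 hT
  set φ : ℝ → ℝ := fun l => ∑ t ∈ Finset.Icc 1 T,
    (max (l - pbar t) 0 / p' t + min (l - ε * pbar t) 0 / (ε ^ 2 * p' t)) with hφdef
  have hcont : Continuous φ := by
    apply continuous_finset_sum
    intro t _
    exact (((continuous_id.sub continuous_const).max continuous_const).div_const _).add
      (((continuous_id.sub continuous_const).min continuous_const).div_const _)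
  have hφ0 : φ 0 < 0 := by
    apply Finset.sum_neg ?_ hSne
    intro t ht
    obtain ⟨ht1, ht2⟩ := Finset.mem_Icc.1 ht
    have hp := hp' t ht1 ht2
    have hpb := hpbar t ht1 ht2
    rw [max_eq_right (by linarith), min_eq_left (by nlinarith), zero_div, zero_add]
    apply div_neg_of_neg_of_pos (by nlinarith) (by positivity)
  set M : ℝ := 1 + ∑ t ∈ Finset.Icc 1 T, pbar t with hMdef
  have hpos : ∀ t ∈ Finset.Icc 1 T, 0 < pbar t := fun t ht => by
    obtain ⟨ht1, ht2⟩ := Finset.mem_Icc.1 ht; exact hpbar t ht1 ht2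
  have hMt : ∀ t ∈ Finset.Icc 1 T, pbar t < M := by
    intro t ht
    have := Finset.single_le_sum (f := pbar) (fun i hi => (hpos i hi).le) ht
    rw [hMdef]; linarith
  have hφM : 0 < φ M := by
    apply Finset.sum_pos ?_ hSne
    intro t ht
    obtain ⟨ht1, ht2⟩ := Finset.mem_Icc.1 ht
    have hp := hp' t ht1 ht2
    have hpb := hpos t ht
    have hM := hMt t ht
    rw [max_eq_left (by linarith), min_eq_right (by nlinarith), zero_div, add_zero]
    exact div_pos (by linarith) hp
  have hM0 : (0:ℝ) ≤ M := by
    have : (0:ℝ) ≤ ∑ t ∈ Finset.Icc 1 T, pbar t :=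
      Finset.sum_nonneg fun i hi => (hpos i hi).le
    rw [hMdef]; linarith
  obtain ⟨lam, hlamI, hlameq⟩ :=
    intermediate_value_Icc hM0 hcont.continuousOn ⟨hφ0.le, hφM.le⟩
  have hlampos : 0 < lam := by
    rcases lt_or_eq_of_le hlamI.1 with h | h
    · exact h
    · exfalso; rw [← h] at hlameq; linarith
  refine ⟨lam, hlampos, ?_⟩
  intro n hn t ht1 ht2
  have hn1 : (0:ℝ) < (n:ℝ) + 1 := by positivity
  -- the candidate minimizer
  set xs : ℕ → ℝ := fun u => max (lam - pbar u) 0 / (((n:ℝ) + 1) * p' u)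
      + min (lam - ε * pbar u) 0 / (((n:ℝ) + 1) * ε ^ 2 * p' u) with hxsdef
  have hxs_sum : ∑ u ∈ Finset.Icc 1 T, xs u = 0 := by
    have h1 : ∀ u ∈ Finset.Icc 1 T, xs u =
        (max (lam - pbar u) 0 / p' u + min (lam - ε * pbar u) 0 / (ε ^ 2 * p' u))
          / ((n:ℝ) + 1) := by
      intro u hu
      obtain ⟨hu1, hu2⟩ := Finset.mem_Icc.1 hu
      have hp := hp' u hu1 hu2
      rw [hxsdef]
      field_simp
    rw [Finset.sum_congr rfl h1, ← Finset.sum_div]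
    rw [hφdef] at hlameq
    simp only at hlameq
    rw [hlameq, zero_div]
  -- equality of objectives
  have hAB : symObj T n pbar p' ε (xf n) = symObj T n pbar p' ε xs := by
    have h1 := hmin n hn xs hxs_sum
    -- reverse inequality via key lemma
    have hG_le : ∀ u ∈ Finset.Icc 1 T,
        pbar u * hfun ε (xs u) + ((n:ℝ) + 1) / 2 * p' u * hfun ε (xs u) ^ 2 - lam * xs u
          ≤ pbar u * hfun ε (xf n u) + ((n:ℝ) + 1) / 2 * p' u * hfun ε (xf n u) ^ 2
              - lam * xf n u := by
      intro u hu
      obtain ⟨hu1, hu2⟩ := Finset.mem_Icc.1 hu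
      by_cases h : xf n u = xs u
      · rw [h]
      · exact (key (pbar u) (((n:ℝ) + 1) / 2 * p' u) ε lam (xf n u) (xs u)
          (hpbar u hu1 hu2) (by have := hp' u hu1 hu2; positivity) hε0 hε1
          (by rw [hxsdef]; ring_nf) h).le
    have h2 := Finset.sum_le_sum hG_le
    rw [Finset.sum_sub_distrib, Finset.sum_sub_distrib, ← Finset.mul_sum, ← Finset.mul_sum,
      hxs_sum, hcyc n hn] at h2
    simp only [mul_zero, sub_zero] at h2
    exact le_antisymm h1 h2
  -- pointwise identification
  have hxft : xf n t = xs t := by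
    by_contra h
    have htS : t ∈ Finset.Icc 1 T := Finset.mem_Icc.2 ⟨ht1, ht2⟩
    have hG_le : ∀ u ∈ Finset.Icc 1 T,
        pbar u * hfun ε (xs u) + ((n:ℝ) + 1) / 2 * p' u * hfun ε (xs u) ^ 2 - lam * xs u
          ≤ pbar u * hfun ε (xf n u) + ((n:ℝ) + 1) / 2 * p' u * hfun ε (xf n u) ^ 2
              - lam * xf n u := by
      intro u hu
      obtain ⟨hu1, hu2⟩ := Finset.mem_Icc.1 hu
      by_cases h' : xf n u = xs u
      · rw [h']
      · exact (key (pbar u) (((n:ℝ) + 1) / 2 * p' u) ε lam (xf n u) (xs u)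
          (hpbar u hu1 hu2) (by have := hp' u hu1 hu2; positivity) hε0 hε1
          (by rw [hxsdef]; ring_nf) h').le
    have hGt : pbar t * hfun ε (xs t) + ((n:ℝ) + 1) / 2 * p' t * hfun ε (xs t) ^ 2
          - lam * xs t
        < pbar t * hfun ε (xf n t) + ((n:ℝ) + 1) / 2 * p' t * hfun ε (xf n t) ^ 2
          - lam * xf n t :=
      key (pbar t) (((n:ℝ) + 1) / 2 * p' t) ε lam (xf n t) (xs t)
        (hpbar t ht1 ht2) (by have := hp' t ht1 ht2; positivity) hε0 hε1
        (by rw [hxsdef]; ring_nf) h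
    have h2 := Finset.sum_lt_sum hG_le ⟨t, htS, hGt⟩
    rw [Finset.sum_sub_distrib, Finset.sum_sub_distrib, ← Finset.mul_sum, ← Finset.mul_sum,
      hxs_sum, hcyc n hn] at h2
    simp only [mul_zero, sub_zero] at h2
    have : symObj T n pbar p' ε xs < symObj T n pbar p' ε (xf n) := h2
    rw [hAB] at this
    exact lt_irrefl _ this
  have hp := hp' t ht1 ht2
  have hpb := hpbar t ht1 ht2
  refine ⟨?_, ?_, ?_⟩
  · intro hlt
    rw [hxft, hxsdef]
    simp only
    rw [max_eq_left (by linarith), min_eq_right (by nlinarith), zero_div, add_zero]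
  · intro hge hle
    rw [hxft, hxsdef]
    simp only
    have h1 : ε * pbar t ≤ lam := by
      rw [le_div_iff₀ hε0] at hle; linarith [hle]
    rw [max_eq_right (by linarith), min_eq_right (by linarith), zero_div, zero_div, add_zero]
  · intro hle
    rw [hxft, hxsdef]
    simp only
    have h1 : lam ≤ ε * pbar t := by
      rw [div_le_iff₀ hε0] at hle; linarith [hle]
    rw [max_eq_right (by nlinarith), min_eq_left (by linarith), zero_div, zero_add]
end

section
/- With linear prices, common efficiency, and no capacity or rate constraints (stores never emptying), at the unique symmetric n-store Nash equilibrium each store's profit equals ∑_{t=1}^T p'_t h(x_t(S̄⁽ⁿ⁾))², the per-store traded quantities are proportional to 1/(n+1) (i.e., h(x_t(S̄⁽ⁿ⁾)) = (2/(n+1)) h(x_t(S̄⁽¹⁾))), and hence the per-store profit is proportional to 1/(n+1)², so the total profit of the n stores equals 4n/(n+1)² times the single-store (monopoly) profit. -/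
lemma hfun_smul (ε : ℝ) {c : ℝ} (hc : 0 ≤ c) (x : ℝ) :
    hfun ε (c * x) = c * hfun ε x := by
  unfold hfun
  split_ifs with h1 h2 h2
  · rfl
  · rcases eq_or_lt_of_le hc with rfl | hc'
    · ring
    · exact absurd h1 (by push_neg; exact mul_neg_of_pos_of_neg hc' (lt_of_not_ge h2))
  · exact absurd (mul_nonneg hc h2) h1
  · ring

lemma h_grad {ε : ℝ} (hε0 : 0 < ε) (hε1 : ε ≤ 1) (u v : ℝ) :
    hfun ε v + (if 0 ≤ v then 1 else ε) * (u - v) ≤ hfun ε u := by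
  unfold hfun
  split_ifs with h1 h2 h2 h2
  · linarith
  · nlinarith [lt_of_not_ge h2]
  · nlinarith [lt_of_not_ge h1]
  · linarith

lemma h_mid {ε : ℝ} (hε0 : 0 < ε) (hε1 : ε ≤ 1) (x y : ℝ) :
    hfun ε ((x + y) / 2) ≤ (hfun ε x + hfun ε y) / 2 := by
  set m := (x + y) / 2 with hm
  have g1 := h_grad hε0 hε1 x m
  have g2 := h_grad hε0 hε1 y m
  have key : (if 0 ≤ m then (1:ℝ) else ε) * (x - m) + (if 0 ≤ m then (1:ℝ) else ε) * (y - m) = 0 := by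
    rw [← mul_add]
    have : (x - m) + (y - m) = 0 := by rw [hm]; ring
    rw [this, mul_zero]
  linarith

lemma hsq_grad {ε : ℝ} (hε0 : 0 < ε) (hε1 : ε ≤ 1) {u v : ℝ} (huv : u ≠ v) :
    (hfun ε v) ^ 2 + 2 * hfun (ε ^ 2) v * (u - v) < (hfun ε u) ^ 2 := by
  have hd : u - v ≠ 0 := sub_ne_zero.mpr huv
  have hne : (0:ℝ) < (u - v) ^ 2 := by positivity
  unfold hfun
  split_ifs with h1 h2 h2
  · nlinarith
  · -- u < 0, v ≥ 0 : goal ... < (ε u)^2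
    have hu : u < 0 := lt_of_not_ge h2
    nlinarith [sq_nonneg (ε * u - v), mul_pos hε0 hε0, sq_nonneg v,
      mul_nonneg (mul_nonneg (sub_nonneg.mpr hε1) hε0.le) (mul_nonneg (neg_nonneg.mpr hu.le) h1),
      mul_nonneg (sub_nonneg.mpr hε1) (mul_nonneg (neg_nonneg.mpr hu.le) h1)]
  · -- u ≥ 0, v < 0
    have hv : v < 0 := lt_of_not_ge h1
    nlinarith [sq_nonneg (u - ε ^ 2 * v), mul_pos hε0 hε0, sq_nonneg (ε * v),
      mul_pos (mul_pos hε0 hε0) (mul_pos (neg_pos.mpr hv) (neg_pos.mpr hv)),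
      mul_nonneg (sub_nonneg.mpr hε1) hε0.le, sq_nonneg v,
      mul_nonneg (mul_nonneg (sub_nonneg.mpr hε1) hε0.le) h2,
      mul_nonneg (mul_nonneg (mul_nonneg (sub_nonneg.mpr hε1) hε0.le) hε0.le) (sq_nonneg v)]
  · nlinarith [mul_pos hε0 hε0]

lemma hsq_mid {ε : ℝ} (hε0 : 0 < ε) (hε1 : ε ≤ 1) {x y : ℝ} (hxy : x ≠ y) :
    (hfun ε ((x + y) / 2)) ^ 2 < ((hfun ε x) ^ 2 + (hfun ε y) ^ 2) / 2 := by
  set m := (x + y) / 2 with hm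
  have hx : x ≠ m := by intro h; apply hxy; rw [hm] at h; linarith
  have hy : y ≠ m := by intro h; apply hxy; rw [hm] at h; linarith
  have g1 := hsq_grad hε0 hε1 hx
  have g2 := hsq_grad hε0 hε1 hy
  have key : 2 * hfun (ε ^ 2) m * (x - m) + 2 * hfun (ε ^ 2) m * (y - m) = 0 := by
    rw [← mul_add]
    have : (x - m) + (y - m) = 0 := by rw [hm]; ring
    rw [this, mul_zero]
  linarith

lemma gstrict {ε : ℝ} (hε0 : 0 < ε) (hε1 : ε ≤ 1) {pb pq a : ℝ} (hpb : 0 < pb)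
    (hpq : 0 < pq) (ha : 0 < a) {x y : ℝ} (hxy : x ≠ y) :
    pb * hfun ε ((x + y) / 2) + a * pq * (hfun ε ((x + y) / 2)) ^ 2 <
      ((pb * hfun ε x + a * pq * (hfun ε x) ^ 2) +
        (pb * hfun ε y + a * pq * (hfun ε y) ^ 2)) / 2 := by
  have h1 := mul_le_mul_of_nonneg_left (h_mid hε0 hε1 x y) hpb.le
  have h2 := mul_lt_mul_of_pos_left (hsq_mid hε0 hε1 hxy) (mul_pos ha hpq)
  nlinarith

lemma symObj_smul (T n : ℕ) (pbar p' : ℕ → ℝ) (ε : ℝ) (x : ℕ → ℝ) {s : ℝ} (hs : 0 ≤ s) :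
    symObj T n pbar p' ε (fun t => s * x t) =
      s * (∑ t ∈ Finset.Icc 1 T, pbar t * hfun ε (x t)) +
      s ^ 2 * (((n : ℝ) + 1) / 2 * ∑ t ∈ Finset.Icc 1 T, p' t * (hfun ε (x t)) ^ 2) := by
  unfold symObj
  simp only [hfun_smul ε hs]
  rw [Finset.mul_sum, Finset.mul_sum, Finset.mul_sum, ← Finset.sum_add_distrib]
  exact Finset.sum_congr rfl fun t _ => by ring

lemma symObj_scale (T n : ℕ) (pbar p' : ℕ → ℝ) (ε : ℝ) (x : ℕ → ℝ) :
    symObj T n pbar p' ε (fun t => (2 / ((n : ℝ) + 1)) * x t) =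
      (2 / ((n : ℝ) + 1)) * symObj T 1 pbar p' ε x := by
  have hn1 : ((n : ℝ) + 1) ≠ 0 := by positivity
  have hc : (0:ℝ) ≤ 2 / ((n : ℝ) + 1) := by positivity
  rw [symObj_smul T n pbar p' ε x hc]
  have h1 : symObj T 1 pbar p' ε x =
      (∑ t ∈ Finset.Icc 1 T, pbar t * hfun ε (x t)) +
      (∑ t ∈ Finset.Icc 1 T, p' t * (hfun ε (x t)) ^ 2) := by
    have := symObj_smul T 1 pbar p' ε x zero_le_one
    simpa using this
  rw [h1]
  field_simp

lemma minimizer_unique (T n : ℕ) (pbar p' : ℕ → ℝ)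
    (hpbar : ∀ t, 1 ≤ t → t ≤ T → 0 < pbar t) (hp' : ∀ t, 1 ≤ t → t ≤ T → 0 < p' t)
    {ε : ℝ} (hε0 : 0 < ε) (hε1 : ε ≤ 1) (x y : ℕ → ℝ)
    (hx0 : ∑ t ∈ Finset.Icc 1 T, x t = 0) (hy0 : ∑ t ∈ Finset.Icc 1 T, y t = 0)
    (hxm : ∀ z : ℕ → ℝ, (∑ t ∈ Finset.Icc 1 T, z t = 0) →
      symObj T n pbar p' ε x ≤ symObj T n pbar p' ε z)
    (hym : ∀ z : ℕ → ℝ, (∑ t ∈ Finset.Icc 1 T, z t = 0) →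
      symObj T n pbar p' ε y ≤ symObj T n pbar p' ε z) :
    ∀ t ∈ Finset.Icc 1 T, x t = y t := by
  by_contra hcon
  push_neg at hcon
  obtain ⟨t₀, ht₀, hne⟩ := hcon
  set z : ℕ → ℝ := fun t => (x t + y t) / 2 with hz
  have hz0 : ∑ t ∈ Finset.Icc 1 T, z t = 0 := by
    simp only [hz]
    rw [← Finset.sum_div, Finset.sum_add_distrib, hx0, hy0]
    norm_num
  have ha : (0:ℝ) < ((n : ℝ) + 1) / 2 := by positivity
  have hlt : symObj T n pbar p' ε z <
      (symObj T n pbar p' ε x + symObj T n pbar p' ε y) / 2 := by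
    unfold symObj
    rw [← Finset.sum_add_distrib, Finset.sum_div]
    apply Finset.sum_lt_sum
    · intro t ht
      obtain ⟨h1, h2⟩ := Finset.mem_Icc.mp ht
      by_cases hxy : x t = y t
      · have : z t = x t := by simp only [hz]; rw [hxy]; ring
        exact le_of_eq (by rw [this, hxy]; ring)
      · exact (gstrict hε0 hε1 (hpbar t h1 h2) (hp' t h1 h2) ha hxy).le
    · exact ⟨t₀, ht₀, by
        obtain ⟨h1, h2⟩ := Finset.mem_Icc.mp ht₀
        exact gstrict hε0 hε1 (hpbar t₀ h1 h2) (hp' t₀ h1 h2) ha hne⟩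
  have hxy : symObj T n pbar p' ε x = symObj T n pbar p' ε y :=
    le_antisymm (hxm y hy0) (hym x hx0)
  have := hxm z hz0
  rw [hxy] at this
  linarith

lemma foc (T n : ℕ) (pbar p' : ℕ → ℝ) (ε : ℝ) (x : ℕ → ℝ)
    (hx0 : ∑ t ∈ Finset.Icc 1 T, x t = 0)
    (hxm : ∀ z : ℕ → ℝ, (∑ t ∈ Finset.Icc 1 T, z t = 0) →
      symObj T n pbar p' ε x ≤ symObj T n pbar p' ε z) :
    (∑ t ∈ Finset.Icc 1 T, pbar t * hfun ε (x t)) +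
      ((n : ℝ) + 1) * (∑ t ∈ Finset.Icc 1 T, p' t * (hfun ε (x t)) ^ 2) = 0 := by
  set A := ∑ t ∈ Finset.Icc 1 T, pbar t * hfun ε (x t) with hA
  set b := ((n : ℝ) + 1) / 2 * ∑ t ∈ Finset.Icc 1 T, p' t * (hfun ε (x t)) ^ 2 with hb
  -- value of the objective along scalings s • x, s ≥ 0
  have hval : ∀ s : ℝ, 0 ≤ s → symObj T n pbar p' ε (fun t => s * x t) = s * A + s ^ 2 * b :=
    fun s hs => symObj_smul T n pbar p' ε x hs
  have hfeas : ∀ s : ℝ, ∑ t ∈ Finset.Icc 1 T, s * x t = 0 := by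
    intro s; rw [← Finset.mul_sum, hx0, mul_zero]
  have hx1 : symObj T n pbar p' ε x = A + b := by
    have := hval 1 zero_le_one
    simpa using this
  have hle : ∀ s : ℝ, 0 ≤ s → A + b ≤ s * A + s ^ 2 * b := by
    intro s hs
    rw [← hx1, ← hval s hs]
    exact hxm _ (hfeas s)
  -- b ≥ 0 is not even needed separately; derive A + 2b = 0
  have h0 : A + b ≤ 0 := by have := hle 0 le_rfl; simpa using this
  have h2 : A + b ≤ 2 * A + 4 * b := by have := hle 2 (by norm_num); nlinarith [this]
  suffices h : A + 2 * b = 0 by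
    have : ((n : ℝ) + 1) * (∑ t ∈ Finset.Icc 1 T, p' t * (hfun ε (x t)) ^ 2) = 2 * b := by
      rw [hb]; ring
    rw [this]; linarith
  rcases eq_or_lt_of_le (by linarith : (0:ℝ) ≤ b) with hb0 | hbpos
  · -- b = 0 : then A ≤ 0 and A ≥ -3b = 0
    have : A = 0 := by nlinarith
    rw [this, ← hb0]; ring
  · set s := -A / (2 * b) with hs
    have hApos : A < 0 := by nlinarith
    have hsnn : 0 ≤ s := by
      rw [hs]; apply div_nonneg (by linarith) (by linarith)
    have hs2b : s * (2 * b) = -A := by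
      rw [hs]; field_simp
    have hineq := hle s hsnn
    have hsq : (A + 2 * b) ^ 2 ≤ 0 := by
      nlinarith [hineq, hs2b, hbpos, mul_le_mul_of_nonneg_left hineq (by positivity : (0:ℝ) ≤ 4 * b),
        sq_nonneg (s * (2 * b) + A)]
    have : (A + 2 * b) ^ 2 = 0 := le_antisymm hsq (sq_nonneg _)
    exact pow_eq_zero_iff (by norm_num) |>.mp this

/-- at the unconstrained symmetric `n`-store Cournot equilibrium
with linear prices, each store's profit equals `∑_t p'_t h(x_t)²`, the traded
quantities scale as `2/(n+1)` times the single-store quantities, the per-store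
profit is `4/(n+1)²` times the single-store profit, and hence the total profit
of the `n` stores is `4n/(n+1)²` times the single-store (monopoly) profit. -/
theorem stmt17 (T : ℕ) (hT : 1 ≤ T) (pbar p' : ℕ → ℝ)
    (hpbar : ∀ t, 1 ≤ t → t ≤ T → 0 < pbar t) (hp' : ∀ t, 1 ≤ t → t ≤ T → 0 < p' t)
    (ε : ℝ) (hε0 : 0 < ε) (hε1 : ε ≤ 1)
    (xf : ℕ → ℕ → ℝ)
    (hcyc : ∀ n, 1 ≤ n → ∑ t ∈ Finset.Icc 1 T, xf n t = 0)
    (hmin : ∀ n, 1 ≤ n → ∀ y : ℕ → ℝ, (∑ t ∈ Finset.Icc 1 T, y t = 0) →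
      symObj T n pbar p' ε (xf n) ≤ symObj T n pbar p' ε y) :
    ∀ n, 1 ≤ n →
      -- per-store traded quantities are proportional to 1/(n+1)
      (∀ t, 1 ≤ t → t ≤ T →
        hfun ε (xf n t) = (2 / ((n : ℝ) + 1)) * hfun ε (xf 1 t)) ∧
      -- each store's profit (the negative of its cost) equals ∑_t p'_t h(x_t)²
      (-(∑ t ∈ Finset.Icc 1 T, hfun ε (xf n t) *
            (pbar t + (n : ℝ) * p' t * hfun ε (xf n t))) =
        ∑ t ∈ Finset.Icc 1 T, p' t * (hfun ε (xf n t)) ^ 2) ∧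
      -- per-store profit is 4/(n+1)² times the single-store profit
      ((∑ t ∈ Finset.Icc 1 T, p' t * (hfun ε (xf n t)) ^ 2) =
        (4 / ((n : ℝ) + 1) ^ 2) * ∑ t ∈ Finset.Icc 1 T, p' t * (hfun ε (xf 1 t)) ^ 2) ∧
      -- total profit of the n stores is 4n/(n+1)² times the single-store profit
      ((n : ℝ) * ∑ t ∈ Finset.Icc 1 T, p' t * (hfun ε (xf n t)) ^ 2 =
        (4 * (n : ℝ) / ((n : ℝ) + 1) ^ 2) *
          ∑ t ∈ Finset.Icc 1 T, p' t * (hfun ε (xf 1 t)) ^ 2) := by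

  intro n hn
  have hn1 : (0:ℝ) < (n : ℝ) + 1 := by positivity
  have hc0 : (0:ℝ) ≤ 2 / ((n : ℝ) + 1) := by positivity
  -- the scaled single-store solution is a minimizer of the n-store problem
  have hy0 : ∑ t ∈ Finset.Icc 1 T, (2 / ((n : ℝ) + 1)) * xf 1 t = 0 := by
    rw [← Finset.mul_sum, hcyc 1 le_rfl, mul_zero]
  have hymin : ∀ w : ℕ → ℝ, (∑ t ∈ Finset.Icc 1 T, w t = 0) →
      symObj T n pbar p' ε (fun t => (2 / ((n : ℝ) + 1)) * xf 1 t) ≤ symObj T n pbar p' ε w := by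
    intro w hw
    have hw'0 : ∑ t ∈ Finset.Icc 1 T, (((n : ℝ) + 1) / 2) * w t = 0 := by
      rw [← Finset.mul_sum, hw, mul_zero]
    have hwe : w = fun t => (2 / ((n : ℝ) + 1)) * ((((n : ℝ) + 1) / 2) * w t) := by
      funext t; field_simp
    calc symObj T n pbar p' ε (fun t => (2 / ((n : ℝ) + 1)) * xf 1 t)
        = (2 / ((n : ℝ) + 1)) * symObj T 1 pbar p' ε (xf 1) := symObj_scale T n pbar p' ε (xf 1)
      _ ≤ (2 / ((n : ℝ) + 1)) * symObj T 1 pbar p' ε (fun t => (((n : ℝ) + 1) / 2) * w t) :=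
          mul_le_mul_of_nonneg_left (hmin 1 le_rfl _ hw'0) hc0
      _ = symObj T n pbar p' ε w := by
          rw [← symObj_scale T n pbar p' ε (fun t => (((n : ℝ) + 1) / 2) * w t)]
          congr 1
          exact hwe.symm
  have hequal : ∀ t ∈ Finset.Icc 1 T, xf n t = (2 / ((n : ℝ) + 1)) * xf 1 t :=
    minimizer_unique T n pbar p' hpbar hp' hε0 hε1 (xf n) _ (hcyc n hn) hy0 (hmin n hn) hymin
  have hpart1 : ∀ t, 1 ≤ t → t ≤ T →
      hfun ε (xf n t) = (2 / ((n : ℝ) + 1)) * hfun ε (xf 1 t) := by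
    intro t h1 h2
    rw [hequal t (Finset.mem_Icc.mpr ⟨h1, h2⟩)]
    exact hfun_smul ε hc0 _
  have hpart3 : (∑ t ∈ Finset.Icc 1 T, p' t * (hfun ε (xf n t)) ^ 2) =
      (4 / ((n : ℝ) + 1) ^ 2) * ∑ t ∈ Finset.Icc 1 T, p' t * (hfun ε (xf 1 t)) ^ 2 := by
    have key : ∀ t ∈ Finset.Icc 1 T, p' t * (hfun ε (xf n t)) ^ 2
        = (4 / ((n : ℝ) + 1) ^ 2) * (p' t * (hfun ε (xf 1 t)) ^ 2) := by
      intro t ht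
      obtain ⟨h1, h2⟩ := Finset.mem_Icc.mp ht
      rw [hpart1 t h1 h2]
      field_simp
      ring
    rw [Finset.sum_congr rfl key, ← Finset.mul_sum]
  refine ⟨hpart1, ?_, hpart3, by rw [hpart3]; ring⟩
  have hfocn := foc T n pbar p' ε (xf n) (hcyc n hn) (hmin n hn)
  have e : ∑ t ∈ Finset.Icc 1 T, hfun ε (xf n t) * (pbar t + (n : ℝ) * p' t * hfun ε (xf n t))
      = (∑ t ∈ Finset.Icc 1 T, pbar t * hfun ε (xf n t))
        + (n : ℝ) * ∑ t ∈ Finset.Icc 1 T, p' t * (hfun ε (xf n t)) ^ 2 := by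
    rw [Finset.mul_sum, ← Finset.sum_add_distrib]
    exact Finset.sum_congr rfl fun t _ => by ring
  rw [e]
  nlinarith [hfocn]
end

section
/- Suppose for t = 1, 2 the residual supply functions R_t: ℝ → ℝ are continuous and strictly increasing with R_t(ℝ) = ℝ, and each supply bid S_k: ℝ → ℝ is nondecreasing with ∑_k S_k continuous and strictly increasing and surjective. Then the system R₁(p₁) = ∑_k S_k(p), R₂(p₂) = −∑_k S_k(p), p₂ − p₁ = p, has at most one solution (p, p₁, p₂). -/
/-- uniqueness of the two-period market clearing under supply
function bidding by stores.  With continuous, strictly increasing, surjective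
residual supply functions `R₁, R₂`, and nondecreasing supply bids `S k` whose
sum is continuous, strictly increasing and surjective, the system
`R₁(p₁) = ∑_k S_k(p)`, `R₂(p₂) = −∑_k S_k(p)`, `p₂ − p₁ = p` has at most one
solution `(p, p₁, p₂)`. -/
theorem stmt19 (n : ℕ) (R1 R2 : ℝ → ℝ)
    (hR1c : Continuous R1) (hR1m : StrictMono R1) (hR1s : Function.Surjective R1)
    (hR2c : Continuous R2) (hR2m : StrictMono R2) (hR2s : Function.Surjective R2)
    (S : Fin n → ℝ → ℝ) (hSmono : ∀ k, Monotone (S k))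
    (hSc : Continuous fun p => ∑ k, S k p)
    (hSm : StrictMono fun p => ∑ k, S k p)
    (hSs : Function.Surjective fun p => ∑ k, S k p) :
    ∀ p p1 p2 q q1 q2 : ℝ,
      (R1 p1 = ∑ k, S k p ∧ R2 p2 = -∑ k, S k p ∧ p2 - p1 = p) →
      (R1 q1 = ∑ k, S k q ∧ R2 q2 = -∑ k, S k q ∧ q2 - q1 = q) →
      p = q ∧ p1 = q1 ∧ p2 = q2 := by
  have key : ∀ p p1 p2 q q1 q2 : ℝ,
      (R1 p1 = ∑ k, S k p ∧ R2 p2 = -∑ k, S k p ∧ p2 - p1 = p) →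
      (R1 q1 = ∑ k, S k q ∧ R2 q2 = -∑ k, S k q ∧ q2 - q1 = q) →
      ¬ p < q := by
    rintro p p1 p2 q q1 q2 ⟨h1, h2, h3⟩ ⟨g1, g2, g3⟩ hpq
    have hS : (∑ k, S k p) < ∑ k, S k q := hSm hpq
    have h11 : p1 < q1 := hR1m.lt_iff_lt.mp (by rw [h1, g1]; exact hS)
    have h22 : q2 < p2 := hR2m.lt_iff_lt.mp (by rw [h2, g2]; linarith)
    linarith
  rintro p p1 p2 q q1 q2 hp hq
  have hpq : p = q := le_antisymm (not_lt.mp (key q q1 q2 p p1 p2 hq hp))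
    (not_lt.mp (key p p1 p2 q q1 q2 hp hq))
  subst hpq
  refine ⟨rfl, hR1m.injective ?_, hR2m.injective ?_⟩
  · rw [hp.1, hq.1]
  · rw [hp.2.1, hq.2.1]
end
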